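/- For a Markov chain (X_n) on a finite state space S with disjoint nonempty sets A, B ⊆ S, the distribution of reactive trajectories satisfies μ^{AB}_i(n) = q⁻_i(n) · P(X_n = i) · q⁺_i(n), where q⁺_i(n) = P(τ⁺_B(n) < τ⁺_A(n) | X_n = i) is the forward committor and q⁻_i(n) = P(τ⁻_A(n) > τ⁻_B(n) | X_n = i) is the backward committor. -/

import Mathlib

open MeasureTheory ProbabilityTheory

/-- **TPT, distribution of reactive trajectories.**
For a Markov chain `(X n)` on a finite state space `S` with disjoint nonempty sets
`A, B ⊆ S`, the distribution of reactive trajectories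
`μ^{AB}_i(n) = Pr(X n = i, τ⁻_A(n) > τ⁻_B(n), τ⁺_B(n) < τ⁺_A(n))`
satisfies `μ^{AB}_i(n) = q⁻_i(n) ⬝ Pr(X n = i) ⬝ q⁺_i(n)`, where
`q⁺_i(n)` and `q⁻_i(n)` are the forward and backward committors.  The Markov
property is formulated as conditional independence of any event depending only on
the future from any event depending only on the past, given the present state. -/
theorem stmt0
    {S : Type*} [Fintype S] [MeasurableSpace S] [MeasurableSingletonClass S]
    {Ω : Type*} [MeasurableSpace Ω] (Pr : Measure Ω) [IsProbabilityMeasure Pr]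
    (X : ℤ → Ω → S) (hXmeas : ∀ n, Measurable (X n))
    (A B : Finset S) (hA : A.Nonempty) (hB : B.Nonempty) (hAB : Disjoint A B)
    (hMarkov : ∀ (n : ℤ) (i : S) (E F : Set Ω),
      MeasurableSet E → MeasurableSet F →
      (∀ ω ω', (∀ k, n ≤ k → X k ω = X k ω') → (ω ∈ E ↔ ω' ∈ E)) →
      (∀ ω ω', (∀ k, k ≤ n → X k ω = X k ω') → (ω ∈ F ↔ ω' ∈ F)) →
      ProbabilityTheory.cond Pr {ω | X n ω = i} (E ∩ F) =
        ProbabilityTheory.cond Pr {ω | X n ω = i} E *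
          ProbabilityTheory.cond Pr {ω | X n ω = i} F) :
    ∀ (n : ℤ) (i : S),
      Pr ({ω | X n ω = i} ∩
          {ω | ∃ k ≤ n, X k ω ∈ A ∧ ∀ m, k ≤ m → m ≤ n → X m ω ∉ B} ∩
          {ω | ∃ k, n ≤ k ∧ X k ω ∈ B ∧ ∀ m, n ≤ m → m ≤ k → X m ω ∉ A}) =
        ProbabilityTheory.cond Pr {ω | X n ω = i}
            {ω | ∃ k ≤ n, X k ω ∈ A ∧ ∀ m, k ≤ m → m ≤ n → X m ω ∉ B} *
          Pr {ω | X n ω = i} *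
          ProbabilityTheory.cond Pr {ω | X n ω = i}
            {ω | ∃ k, n ≤ k ∧ X k ω ∈ B ∧ ∀ m, n ≤ m → m ≤ k → X m ω ∉ A} := by
  intro n i
  set s : Set Ω := {ω | X n ω = i} with hs
  set P : Set Ω := {ω | ∃ k ≤ n, X k ω ∈ A ∧ ∀ m, k ≤ m → m ≤ n → X m ω ∉ B} with hP
  set F : Set Ω := {ω | ∃ k, n ≤ k ∧ X k ω ∈ B ∧ ∀ m, n ≤ m → m ≤ k → X m ω ∉ A} with hF
  have hsMeas : MeasurableSet s := hXmeas n (measurableSet_singleton i)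
  have hPmeas : MeasurableSet P := by
    have hEq : P = ⋃ k : ℤ, ⋃ _ : k ≤ n,
        ((X k ⁻¹' (A : Set S)) ∩
          ⋂ m : ℤ, ⋂ _ : k ≤ m, ⋂ _ : m ≤ n, (X m ⁻¹' (B : Set S))ᶜ) := by
      ext ω
      simp only [hP, Set.mem_setOf_eq, Set.mem_iUnion, Set.mem_iInter, Set.mem_inter_iff, Set.mem_preimage, Set.mem_compl_iff, Finset.mem_coe]
      tauto
    rw [hEq]
    exact MeasurableSet.iUnion fun k => MeasurableSet.iUnion fun _ =>
      ((hXmeas k A.measurableSet).inter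
        (MeasurableSet.iInter fun m => MeasurableSet.iInter fun _ =>
          MeasurableSet.iInter fun _ => (hXmeas m B.measurableSet).compl))
  have hFmeas : MeasurableSet F := by
    have hEq : F = ⋃ k : ℤ, ⋃ _ : n ≤ k,
        ((X k ⁻¹' (B : Set S)) ∩
          ⋂ m : ℤ, ⋂ _ : n ≤ m, ⋂ _ : m ≤ k, (X m ⁻¹' (A : Set S))ᶜ) := by
      ext ω
      simp only [hF, Set.mem_setOf_eq, Set.mem_iUnion, Set.mem_iInter, Set.mem_inter_iff, Set.mem_preimage, Set.mem_compl_iff, Finset.mem_coe]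
      tauto
    rw [hEq]
    exact MeasurableSet.iUnion fun k => MeasurableSet.iUnion fun _ =>
      ((hXmeas k B.measurableSet).inter
        (MeasurableSet.iInter fun m => MeasurableSet.iInter fun _ =>
          MeasurableSet.iInter fun _ => (hXmeas m A.measurableSet).compl))
  have hPpast : ∀ ω ω', (∀ k, k ≤ n → X k ω = X k ω') → (ω ∈ P ↔ ω' ∈ P) := by
    intro ω ω' h
    constructor
    · rintro ⟨k, hk, hkA, hnot⟩
      exact ⟨k, hk, (h k hk) ▸ hkA, fun m hkm hmn hmB => hnot m hkm hmn ((h m hmn) ▸ hmB)⟩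
    · rintro ⟨k, hk, hkA, hnot⟩
      exact ⟨k, hk, (h k hk).symm ▸ hkA, fun m hkm hmn hmB => hnot m hkm hmn ((h m hmn).symm ▸ hmB)⟩
  have hFfut : ∀ ω ω', (∀ k, n ≤ k → X k ω = X k ω') → (ω ∈ F ↔ ω' ∈ F) := by
    intro ω ω' h
    constructor
    · rintro ⟨k, hk, hkB, hnot⟩
      exact ⟨k, hk, (h k hk) ▸ hkB, fun m hnm hmk hmA => hnot m hnm hmk ((h m hnm) ▸ hmA)⟩
    · rintro ⟨k, hk, hkB, hnot⟩
      exact ⟨k, hk, (h k hk).symm ▸ hkB, fun m hnm hmk hmA => hnot m hnm hmk ((h m hnm).symm ▸ hmA)⟩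
  have hM := hMarkov n i F P hFmeas hPmeas hFfut hPpast
  simp only [← hs, ProbabilityTheory.cond_apply hsMeas] at hM ⊢
  have hinter : s ∩ P ∩ F = s ∩ (F ∩ P) := by
    ext ω; simp only [Set.mem_inter_iff]; tauto
  rw [hinter]
  by_cases h0 : Pr s = 0
  · have h1 : Pr (s ∩ (F ∩ P)) = 0 :=
      le_antisymm (le_trans (measure_mono Set.inter_subset_left) h0.le) zero_le
    rw [h1, h0]
    simp
  · have hfin : Pr s ≠ ⊤ := measure_ne_top Pr s
    have hcancel : (Pr s)⁻¹ * Pr s = 1 := ENNReal.inv_mul_cancel h0 hfin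
    calc Pr (s ∩ (F ∩ P)) = ((Pr s)⁻¹ * Pr s) * Pr (s ∩ (F ∩ P)) := by rw [hcancel, one_mul]
      _ = Pr s * ((Pr s)⁻¹ * Pr (s ∩ (F ∩ P))) := by ring
      _ = Pr s * ((Pr s)⁻¹ * Pr (s ∩ F) * ((Pr s)⁻¹ * Pr (s ∩ P))) := by rw [hM]
      _ = (Pr s)⁻¹ * Pr (s ∩ P) * Pr s * ((Pr s)⁻¹ * Pr (s ∩ F)) := by ring
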